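/- Let ℓ∞⁺ denote the set of bounded sequences s : ℕ → ℝ≥0 with norm ‖s‖ := sup_{i∈ℕ} s i, and let Γ : ℓ∞⁺ → ℓ∞⁺ be continuous (with respect to the sup-norm), monotone, subadditive, and homogeneous of degree one. Suppose there exist M > 0 and a ∈ (0,1) such that ‖Γᵏ(s)‖ ≤ M aᵏ ‖s‖ for all s ∈ ℓ∞⁺ and all k ∈ ℕ. Then there exist λ ∈ (0,1) and s⁰ ∈ ℓ∞⁺ with inf_{i∈ℕ} s⁰_i > 0 such that Γ(s⁰) ≤ λ·s⁰ componentwise (a point of strict decay). -/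

import Mathlib

open scoped NNReal

/-- A nonnegative sequence belongs to `ℓ∞⁺` iff it is bounded. -/
def InLinf (s : ℕ → ℝ≥0) : Prop := BddAbove (Set.range s)

/-- The sup-norm `‖s‖ = ⨆ i, s i` on `ℓ∞⁺`. -/
noncomputable def lnorm (s : ℕ → ℝ≥0) : ℝ≥0 := ⨆ i, s i

/-- The sup-norm distance between two elements of `ℓ∞⁺`. -/
noncomputable def supDist (r s : ℕ → ℝ≥0) : ℝ := ⨆ i, |(r i : ℝ) - (s i : ℝ)|

lemma InLinf.const (c : ℝ≥0) : InLinf (fun _ => c) :=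
  ⟨c, by rintro x ⟨i, rfl⟩; exact le_rfl⟩

lemma InLinf.add {r s : ℕ → ℝ≥0} (hr : InLinf r) (hs : InLinf s) :
    InLinf (fun j => r j + s j) := by
  obtain ⟨A, hA⟩ := hr; obtain ⟨B, hB⟩ := hs
  exact ⟨A + B, by rintro x ⟨i, rfl⟩; exact add_le_add (hA ⟨i, rfl⟩) (hB ⟨i, rfl⟩)⟩

lemma InLinf.smul {s : ℕ → ℝ≥0} (c : ℝ≥0) (hs : InLinf s) :
    InLinf (fun j => c * s j) := by
  obtain ⟨A, hA⟩ := hs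
  exact ⟨c * A, by rintro x ⟨i, rfl⟩; exact mul_le_mul_right (hA ⟨i, rfl⟩) c⟩

lemma InLinf.sum (f : ℕ → ℕ → ℝ≥0) (n : ℕ) (h : ∀ k, InLinf (f k)) :
    InLinf (fun j => ∑ k ∈ Finset.range n, f k j) := by
  induction n with
  | zero => simpa using InLinf.const 0
  | succ n ih =>
    simp only [Finset.sum_range_succ]
    exact ih.add (h n)

lemma le_lnorm {s : ℕ → ℝ≥0} (hs : InLinf s) (i : ℕ) : s i ≤ lnorm s := le_ciSup hs i

theorem UGES_implies_point_of_strict_decay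
    (Γ : (ℕ → ℝ≥0) → ℕ → ℝ≥0)
    (hmap : ∀ s, InLinf s → InLinf (Γ s))
    (hcont : ∀ s, InLinf s → ∀ ε : ℝ, 0 < ε → ∃ δ : ℝ, 0 < δ ∧
      ∀ r, InLinf r → supDist r s < δ → supDist (Γ r) (Γ s) < ε)
    (hmono : ∀ r s, InLinf r → InLinf s → (∀ i, r i ≤ s i) → ∀ i, Γ r i ≤ Γ s i)
    (hsub : ∀ r s, InLinf r → InLinf s → ∀ i, Γ (fun j => r j + s j) i ≤ Γ r i + Γ s i)
    (hhom : ∀ (c : ℝ≥0) (s : ℕ → ℝ≥0), InLinf s → ∀ i, Γ (fun j => c * s j) i = c * Γ s i)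
    (M : ℝ≥0) (hM : 0 < M) (a : ℝ≥0) (ha0 : 0 < a) (ha1 : a < 1)
    (hUGES : ∀ s, InLinf s → ∀ k : ℕ, lnorm (Γ^[k] s) ≤ M * a ^ k * lnorm s) :
    ∃ lam : ℝ≥0, 0 < lam ∧ lam < 1 ∧ ∃ s0 : ℕ → ℝ≥0, InLinf s0 ∧ (0 < ⨅ i, s0 i) ∧
      ∀ i, Γ s0 i ≤ lam * s0 i := by
  classical
  set one : ℕ → ℝ≥0 := fun _ => 1 with hone
  have hone' : InLinf one := InLinf.const 1
  -- iterates stay in ℓ∞⁺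
  have hiter : ∀ k, InLinf (Γ^[k] one) := by
    intro k; induction k with
    | zero => simpa using hone'
    | succ k ih => rw [Function.iterate_succ_apply']; exact hmap _ ih
  have hlnorm_one : lnorm one = 1 := by simp [lnorm, hone]
  have hbound : ∀ k i, Γ^[k] one i ≤ M * a ^ k := by
    intro k i
    calc Γ^[k] one i ≤ lnorm (Γ^[k] one) := le_lnorm (hiter k) i
      _ ≤ M * a ^ k * lnorm one := hUGES one hone' k
      _ = M * a ^ k := by rw [hlnorm_one, mul_one]
  -- choose lam ∈ (a, 1)
  set lam : ℝ≥0 := (1 + a) / 2 with hlam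
  have hlam_pos : 0 < lam := by
    rw [hlam]; positivity
  have ha_lam : a < lam := by
    rw [← NNReal.coe_lt_coe, hlam]
    push_cast
    have : (a : ℝ) < 1 := ha1
    linarith
  have hlam1 : lam < 1 := by
    rw [← NNReal.coe_lt_coe, hlam]
    push_cast
    have : (a : ℝ) < 1 := ha1
    linarith
  set b : ℝ≥0 := lam⁻¹ with hb
  have hlamb : lam * b = 1 := mul_inv_cancel₀ hlam_pos.ne'
  have hb_pos : 0 < b := by positivity
  have hab : a * b < 1 := by
    calc a * b < lam * b := by exact mul_lt_mul_of_pos_right ha_lam hb_pos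
      _ = 1 := hlamb
  -- choose N with M * (a*b)^(N+1) ≤ 1
  obtain ⟨N, hN⟩ : ∃ N : ℕ, M * (a * b) ^ (N + 1) ≤ 1 := by
    have hab' : (↑(a * b) : ℝ) < 1 := hab
    have hMinv : (0 : ℝ) < (M⁻¹ : ℝ≥0) := by
      rw [NNReal.coe_pos]; exact inv_pos.mpr hM
    obtain ⟨n, hn⟩ := exists_pow_lt_of_lt_one hMinv hab'
    refine ⟨n, ?_⟩
    have h1 : (a * b) ^ (n + 1) ≤ (a * b) ^ n :=
      pow_le_pow_of_le_one zero_le hab.le (Nat.le_succ n)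
    have h2 : (a * b) ^ n ≤ M⁻¹ := by
      rw [← NNReal.coe_le_coe]; push_cast; exact hn.le
    calc M * (a * b) ^ (n + 1) ≤ M * M⁻¹ := by
          exact mul_le_mul_right (h1.trans h2) M
      _ ≤ 1 := by
          rw [mul_inv_cancel₀ hM.ne']
  -- the candidate point
  set f : ℕ → ℕ → ℝ≥0 := fun k j => b ^ k * Γ^[k] one j with hf
  have hfLinf : ∀ k, InLinf (f k) := fun k => (hiter k).smul _
  set s0 : ℕ → ℝ≥0 := fun j => ∑ k ∈ Finset.range (N + 1), f k j with hs0
  have hs0Linf : InLinf s0 := InLinf.sum f (N + 1) hfLinf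
  -- Γ of zero is zero
  have hΓzero : ∀ i, Γ (fun _ => 0) i = 0 := by
    intro i
    have := hhom 0 one hone' i
    simpa using this
  -- finite subadditivity
  have hsubsum : ∀ (n : ℕ) (g : ℕ → ℕ → ℝ≥0), (∀ k, InLinf (g k)) → ∀ i,
      Γ (fun j => ∑ k ∈ Finset.range n, g k j) i ≤ ∑ k ∈ Finset.range n, Γ (g k) i := by
    intro n
    induction n with
    | zero =>
      intro g hg i
      simpa using (hΓzero i).le
    | succ n ih =>
      intro g hg i
      have h1 : Γ (fun j => ∑ k ∈ Finset.range (n + 1), g k j) i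
          = Γ (fun j => (∑ k ∈ Finset.range n, g k j) + g n j) i := by
        simp [Finset.sum_range_succ]
      rw [h1, Finset.sum_range_succ]
      calc Γ (fun j => (∑ k ∈ Finset.range n, g k j) + g n j) i
          ≤ Γ (fun j => ∑ k ∈ Finset.range n, g k j) i + Γ (g n) i :=
            hsub _ _ (InLinf.sum g n hg) (hg n) i
        _ ≤ (∑ k ∈ Finset.range n, Γ (g k) i) + Γ (g n) i :=
            add_le_add_left (ih g hg i) _
  refine ⟨lam, hlam_pos, hlam1, s0, hs0Linf, ?_, ?_⟩
  · -- uniform positivity: s0 i ≥ 1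
    have h1 : ∀ i, (1 : ℝ≥0) ≤ s0 i := by
      intro i
      have : f 0 i ≤ s0 i :=
        Finset.single_le_sum (f := fun k => f k i) (fun k _ => zero_le)
          (Finset.mem_range.mpr (Nat.succ_pos N))
      simpa [hf, hone] using this
    have : (1 : ℝ≥0) ≤ ⨅ i, s0 i := le_ciInf h1
    exact lt_of_lt_of_le one_pos this
  · intro i
    -- step 1: subadditivity + homogeneity
    have step1 : Γ s0 i ≤ ∑ k ∈ Finset.range (N + 1), b ^ k * Γ^[k + 1] one i := by
      have h1 := hsubsum (N + 1) f hfLinf i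
      have h2 : ∀ k, Γ (f k) i = b ^ k * Γ^[k + 1] one i := by
        intro k
        have := hhom (b ^ k) (Γ^[k] one) (hiter k) i
        rw [hf]
        rw [this, Function.iterate_succ_apply']
      calc Γ s0 i ≤ ∑ k ∈ Finset.range (N + 1), Γ (f k) i := h1
        _ = ∑ k ∈ Finset.range (N + 1), b ^ k * Γ^[k + 1] one i := by
            exact Finset.sum_congr rfl (fun k _ => h2 k)
    -- step 2: pull out lam
    have step2 : ∑ k ∈ Finset.range (N + 1), b ^ k * Γ^[k + 1] one i
        = lam * ∑ k ∈ Finset.range (N + 1), b ^ (k + 1) * Γ^[k + 1] one i := by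
      rw [Finset.mul_sum]
      refine Finset.sum_congr rfl (fun k _ => ?_)
      rw [pow_succ, ← mul_assoc, ← mul_assoc]
      congr 1
      rw [show lam * b ^ k * b = (lam * b) * b ^ k by ring, hlamb, one_mul]
    -- step 3: T ≤ s0 i where T is the shifted sum
    set T : ℝ≥0 := ∑ k ∈ Finset.range (N + 1), b ^ (k + 1) * Γ^[k + 1] one i with hT
    have hsum_shift : s0 i = 1 + ∑ k ∈ Finset.range N, b ^ (k + 1) * Γ^[k + 1] one i := by
      have hrw : s0 i = ∑ k ∈ Finset.range (N + 1), f k i := rfl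
      rw [hrw, Finset.sum_range_succ' (fun k => f k i) N, hf]
      simp [hone, add_comm]
    have hTsplit : T = (∑ k ∈ Finset.range N, b ^ (k + 1) * Γ^[k + 1] one i)
        + b ^ (N + 1) * Γ^[N + 1] one i := by
      rw [hT, Finset.sum_range_succ]
    have htail : b ^ (N + 1) * Γ^[N + 1] one i ≤ 1 := by
      calc b ^ (N + 1) * Γ^[N + 1] one i ≤ b ^ (N + 1) * (M * a ^ (N + 1)) :=
            mul_le_mul_right (hbound (N + 1) i) _
        _ = M * (a * b) ^ (N + 1) := by rw [mul_pow]; ring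
        _ ≤ 1 := hN
    have hTle : T ≤ s0 i := by
      have : T + 1 ≤ s0 i + 1 := by
        rw [hTsplit, hsum_shift]
        calc (∑ k ∈ Finset.range N, b ^ (k + 1) * Γ^[k + 1] one i)
              + b ^ (N + 1) * Γ^[N + 1] one i + 1
            ≤ (∑ k ∈ Finset.range N, b ^ (k + 1) * Γ^[k + 1] one i) + 1 + 1 := by
              gcongr
          _ = 1 + (∑ k ∈ Finset.range N, b ^ (k + 1) * Γ^[k + 1] one i) + 1 := by ring
      exact le_of_add_le_add_right this
    calc Γ s0 i ≤ lam * T := step1.trans_eq step2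
      _ ≤ lam * s0 i := mul_le_mul_right hTle lam
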